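/- Assume (C, E, s) is an n-exangulated category in which, for every object X, the morphism X → 0 is a trivial inflation and the morphism 0 → X is a trivial deflation; for each object X fix a distinguished n-exangle X → 0 → ⋯ → 0 → ΣX ⇢(δ_X), and let Σ : C → C be the induced functor. Then Σ is dense (essentially surjective): for every object Y₀ of C there exists an object X₀ with ΣX₀ ≅ Y₀. -/

import Mathlib

/-!
Common definitions: complexes of length `n+2`, `n`-exangulated categories
(Herschend–Liu–Nakaoka), and `(n+2)`-angulated categories
(Geiss–Keller–Oppermann), formalized from scratch.
-/

open CategoryTheory CategoryTheory.Limits Opposite ZeroObject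

universe v u

namespace Paper

/-- A complex concentrated in degrees `0, …, n+1`.  Only the objects in degrees
`0, …, n+1` and the differentials `d 0, …, d n` carry information; all objects in
higher degrees are required to be zero. -/
structure ExCpx (n : ℕ) (C : Type u) [Category.{v} C] [Preadditive C] [HasZeroObject C] where
  obj : ℕ → C
  d : ∀ i, obj i ⟶ obj (i + 1)
  dd : ∀ i, i + 1 ≤ n → d i ≫ d (i + 1) = 0
  isZero_of_gt : ∀ i, n + 1 < i → IsZero (obj i)

variable {C : Type u} [Category.{v} C] [Preadditive C] [HasZeroObject C] [HasFiniteBiproducts C] [HasBinaryBiproducts C]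

/-- Morphisms of complexes of length `n+2`. -/
structure CpxHom {n : ℕ} (X Y : ExCpx n C) where
  f : ∀ i, X.obj i ⟶ Y.obj i
  comm : ∀ i, i ≤ n → X.d i ≫ f (i + 1) = f i ≫ Y.d i

/-- The identity morphism of a complex. -/
def CpxHom.id {n : ℕ} (X : ExCpx n C) : CpxHom X X :=
  ⟨fun _ => 𝟙 _, fun i _ => by simp⟩

/-- Composition of morphisms of complexes. -/
def CpxHom.comp {n : ℕ} {X Y Z : ExCpx n C} (φ : CpxHom X Y) (ψ : CpxHom Y Z) : CpxHom X Z :=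
  ⟨fun i => φ.f i ≫ ψ.f i, fun i hi => by
    rw [← Category.assoc, φ.comm i hi, Category.assoc, ψ.comm i hi, ← Category.assoc]⟩

/-- Chain homotopy between two morphisms of complexes of length `n+2`,
for complexes concentrated in degrees `0, …, n+1`. -/
def Homotopic (n : ℕ) {X Y : ExCpx n C} (φ ψ : CpxHom X Y) : Prop :=
  ∃ h : ∀ i, X.obj (i + 1) ⟶ Y.obj i,
    (φ.f 0 - ψ.f 0 = X.d 0 ≫ h 0) ∧
    (∀ i, i + 1 ≤ n → φ.f (i + 1) - ψ.f (i + 1) = X.d (i + 1) ≫ h (i + 1) + h i ≫ Y.d i) ∧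
    (φ.f (n + 1) - ψ.f (n + 1) = h n ≫ Y.d n)

/-- Homotopy equivalence of complexes which is the identity on the two end terms. -/
def FixedEndsHtpyEquiv (n : ℕ) (X Y : ExCpx n C) (h0 : X.obj 0 = Y.obj 0)
    (h1 : X.obj (n + 1) = Y.obj (n + 1)) : Prop :=
  ∃ (u : CpxHom X Y) (v : CpxHom Y X),
    u.f 0 = eqToHom h0 ∧ u.f (n + 1) = eqToHom h1 ∧
    v.f 0 = eqToHom h0.symm ∧ v.f (n + 1) = eqToHom h1.symm ∧
    Homotopic n (u.comp v) (CpxHom.id X) ∧ Homotopic n (v.comp u) (CpxHom.id Y)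

/-- `EE E B A` is the abelian group `E(B, A)` of `E`-extensions. -/
abbrev EE (E : Cᵒᵖ ⥤ C ⥤ AddCommGrpCat.{v}) (B A : C) : Type v := (E.obj (op B)).obj A

/-- Covariant action `f_* δ` of `E` on extensions. -/
def push {E : Cᵒᵖ ⥤ C ⥤ AddCommGrpCat.{v}} {B A A' : C} (f : A ⟶ A') (δ : EE E B A) :
    EE E B A' := ((E.obj (op B)).map f) δ

/-- Contravariant action `g^* δ` of `E` on extensions. -/
def pull {E : Cᵒᵖ ⥤ C ⥤ AddCommGrpCat.{v}} {B B' A : C} (g : B' ⟶ B) (δ : EE E B A) :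
    EE E B' A := ((E.map g.op).app A) δ

/-- Transport of extensions along equalities of objects. -/
def castE {E : Cᵒᵖ ⥤ C ⥤ AddCommGrpCat.{v}} {B B' A A' : C} (hB : B = B') (hA : A = A')
    (δ : EE E B A) : EE E B' A' := by subst hB; subst hA; exact δ

/-- The type of a "distinguished `n`-exangle" predicate. -/
def DistType (n : ℕ) (C : Type u) [Category.{v} C] [Preadditive C] [HasZeroObject C]
    (E : Cᵒᵖ ⥤ C ⥤ AddCommGrpCat.{v}) : Type (max u v) :=
  ∀ X : ExCpx n C, EE E (X.obj (n + 1)) (X.obj 0) → Prop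

/-- `f` is an inflation: it appears as the `0`-th differential of some
distinguished `n`-exangle. -/
def InflationOf {n : ℕ} {E : Cᵒᵖ ⥤ C ⥤ AddCommGrpCat.{v}} (D : DistType n C E)
    {A B : C} (f : A ⟶ B) : Prop :=
  ∃ (X : ExCpx n C) (δ : EE E (X.obj (n + 1)) (X.obj 0)) (h0 : X.obj 0 = A) (h1 : X.obj 1 = B),
    D X δ ∧ X.d 0 = eqToHom h0 ≫ f ≫ eqToHom h1.symm

/-- `f` is a deflation: it appears as the `n`-th differential of some
distinguished `n`-exangle. -/
def DeflationOf {n : ℕ} {E : Cᵒᵖ ⥤ C ⥤ AddCommGrpCat.{v}} (D : DistType n C E)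
    {A B : C} (f : A ⟶ B) : Prop :=
  ∃ (X : ExCpx n C) (δ : EE E (X.obj (n + 1)) (X.obj 0)) (h0 : X.obj n = A)
    (h1 : X.obj (n + 1) = B),
    D X δ ∧ X.d n = eqToHom h0 ≫ f ≫ eqToHom h1.symm

/-- The mapping cone of a morphism of complexes whose `0`-th component is
(an identity up to equality of objects):
`X₁ → X₂ ⊕ Y₁ → ⋯ → X_{n+1} ⊕ Yₙ → Y_{n+1}` with the usual matrix differentials. -/
def IsMappingCone (n : ℕ) {X Y : ExCpx n C} (φ : CpxHom X Y) (M : ExCpx n C) : Prop :=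
  ∃ (e0 : M.obj 0 = X.obj 1) (etop : M.obj (n + 1) = Y.obj (n + 1))
    (emid : ∀ i, 1 ≤ i → i ≤ n → M.obj i = ((X.obj (i + 1)) ⊞ (Y.obj i))),
    (∀ hn : 1 ≤ n,
      M.d 0 = eqToHom e0 ≫ biprod.lift (-(X.d 1)) (φ.f 1) ≫ eqToHom (emid 1 le_rfl hn).symm) ∧
    (∀ i (h1 : 1 ≤ i) (h2 : i + 1 ≤ n),
      M.d i = eqToHom (emid i (by omega) (by omega)) ≫
        biprod.desc (biprod.lift (-(X.d (i + 1))) (φ.f (i + 1))) (biprod.lift 0 (Y.d i)) ≫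
        eqToHom (emid (i + 1) (by omega) (by omega)).symm) ∧
    (∀ hn : 1 ≤ n,
      M.d n = eqToHom (emid n hn le_rfl) ≫ biprod.desc (φ.f (n + 1)) (Y.d n) ≫ eqToHom etop.symm)

/-- The mapping cocone of a morphism of complexes whose `(n+1)`-st component is
(an identity up to equality of objects):
`X₀ → Y₀ ⊕ X₁ → ⋯ → Y_{n-1} ⊕ Xₙ → Yₙ`. -/
def IsMappingCocone (n : ℕ) {X Y : ExCpx n C} (φ : CpxHom X Y) (M : ExCpx n C) : Prop :=
  ∃ (e0 : M.obj 0 = X.obj 0) (etop : M.obj (n + 1) = Y.obj n)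
    (emid : ∀ i, i + 1 ≤ n → M.obj (i + 1) = ((Y.obj i) ⊞ (X.obj (i + 1)))),
    (∀ hn : 1 ≤ n,
      M.d 0 = eqToHom e0 ≫ biprod.lift (φ.f 0) (X.d 0) ≫ eqToHom (emid 0 hn).symm) ∧
    (∀ i (h2 : i + 2 ≤ n),
      M.d (i + 1) = eqToHom (emid i (by omega)) ≫
        biprod.desc (biprod.lift (-(Y.d i)) 0) (biprod.lift (φ.f (i + 1)) (X.d (i + 1))) ≫
        eqToHom (emid (i + 1) (by omega)).symm) ∧
    (∀ i (hi : i + 1 = n),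
      M.d (i + 1) = eqToHom (emid i hi.le) ≫
        biprod.desc (-(Y.d i) ≫ eqToHom (show Y.obj (i + 1) = Y.obj n by rw [hi]))
          (φ.f (i + 1) ≫ eqToHom (show Y.obj (i + 1) = Y.obj n by rw [hi])) ≫
        eqToHom (show Y.obj n = M.obj (i + 2) by subst hi; exact etop.symm))

/-- An `n`-exangulated structure `(𝔼, 𝔰)` on an additive category `C`:
`Dist X δ` says that `⟨X, δ⟩` is a distinguished `n`-exangle (i.e. `𝔰(δ) = [X]`),
together with all the axioms of Herschend–Liu–Nakaoka: `𝔰` is an exact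
realization ((R0), (R1), (R2), realizing every extension, with values in
homotopy classes of complexes with fixed end terms) satisfying (EA1), (EA2)
and (EA2op). -/
structure NExStruct (n : ℕ) (C : Type u) [Category.{v} C] [Preadditive C] [HasZeroObject C]
    [HasFiniteBiproducts C] [HasBinaryBiproducts C] (E : Cᵒᵖ ⥤ C ⥤ AddCommGrpCat.{v}) : Type (max u v) where
  Dist : DistType n C E
  /-- every extension is realized by some distinguished `n`-exangle -/
  realize : ∀ {A B : C} (δ : EE E B A),
    ∃ (X : ExCpx n C) (h0 : X.obj 0 = A) (h1 : X.obj (n + 1) = B),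
      Dist X (castE h1.symm h0.symm δ)
  /-- distinguished `n`-exangles are `E`-attached complexes -/
  attached_push : ∀ (X : ExCpx n C) (δ : EE E (X.obj (n + 1)) (X.obj 0)),
    Dist X δ → push (X.d 0) δ = 0
  attached_pull : ∀ (X : ExCpx n C) (δ : EE E (X.obj (n + 1)) (X.obj 0)),
    Dist X δ → pull (X.d n) δ = 0
  /-- the realization takes values in homotopy equivalence classes: closure -/
  dist_htpy : ∀ (X Y : ExCpx n C) (h0 : X.obj 0 = Y.obj 0) (h1 : X.obj (n + 1) = Y.obj (n + 1))
    (δ : EE E (X.obj (n + 1)) (X.obj 0)),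
    Dist X δ → FixedEndsHtpyEquiv n X Y h0 h1 → Dist Y (castE h1 h0 δ)
  /-- the realization takes values in homotopy equivalence classes: uniqueness -/
  dist_unique : ∀ (X Y : ExCpx n C) (h0 : X.obj 0 = Y.obj 0) (h1 : X.obj (n + 1) = Y.obj (n + 1))
    (δ : EE E (X.obj (n + 1)) (X.obj 0)),
    Dist X δ → Dist Y (castE h1 h0 δ) → FixedEndsHtpyEquiv n X Y h0 h1
  /-- (R0): morphisms of extensions lift to morphisms of the realizing complexes -/
  liftMor : ∀ (X Y : ExCpx n C) (δ : EE E (X.obj (n + 1)) (X.obj 0))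
    (ρ : EE E (Y.obj (n + 1)) (Y.obj 0)) (a : X.obj 0 ⟶ Y.obj 0)
    (c : X.obj (n + 1) ⟶ Y.obj (n + 1)),
    Dist X δ → Dist Y ρ → push a δ = pull c ρ →
    ∃ φ : CpxHom X Y, φ.f 0 = a ∧ φ.f (n + 1) = c
  /-- (R1), contravariant exactness at the middle terms -/
  exact_contra_mid : ∀ (X : ExCpx n C) (δ : EE E (X.obj (n + 1)) (X.obj 0)), Dist X δ →
    ∀ (W : C) (i : ℕ), i + 1 ≤ n → ∀ g : W ⟶ X.obj (i + 1),
      g ≫ X.d (i + 1) = 0 → ∃ h : W ⟶ X.obj i, h ≫ X.d i = g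
  /-- (R1), contravariant exactness at the last term -/
  exact_contra_top : ∀ (X : ExCpx n C) (δ : EE E (X.obj (n + 1)) (X.obj 0)), Dist X δ →
    ∀ (W : C) (g : W ⟶ X.obj (n + 1)), pull g δ = 0 → ∃ h : W ⟶ X.obj n, h ≫ X.d n = g
  /-- (R1), covariant exactness at the middle terms -/
  exact_cov_mid : ∀ (X : ExCpx n C) (δ : EE E (X.obj (n + 1)) (X.obj 0)), Dist X δ →
    ∀ (W : C) (i : ℕ), i + 1 ≤ n → ∀ g : X.obj (i + 1) ⟶ W,
      X.d i ≫ g = 0 → ∃ h : X.obj (i + 2) ⟶ W, X.d (i + 1) ≫ h = g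
  /-- (R1), covariant exactness at the first term -/
  exact_cov_bot : ∀ (X : ExCpx n C) (δ : EE E (X.obj (n + 1)) (X.obj 0)), Dist X δ →
    ∀ (W : C) (g : X.obj 0 ⟶ W), push g δ = 0 → ∃ h : X.obj 1 ⟶ W, X.d 0 ≫ h = g
  /-- (R2): the zero extension `0 ∈ E(0, A)` is realized by the trivial complex -/
  r2 : ∀ A : C, ∃ X : ExCpx n C, X.obj 0 = A ∧ IsIso (X.d 0) ∧
    (∀ i, 2 ≤ i → IsZero (X.obj i)) ∧ Dist X 0
  /-- (R2), dual: the zero extension `0 ∈ E(A, 0)` is realized by the trivial complex -/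
  r2op : ∀ A : C, ∃ X : ExCpx n C, X.obj (n + 1) = A ∧ IsIso (X.d n) ∧
    (∀ i, i + 1 ≤ n → IsZero (X.obj i)) ∧ Dist X 0
  /-- (EA1): compositions of inflations are inflations -/
  ea1_infl : ∀ {A B D : C} (f : A ⟶ B) (g : B ⟶ D),
    InflationOf Dist f → InflationOf Dist g → InflationOf Dist (f ≫ g)
  /-- (EA1): compositions of deflations are deflations -/
  ea1_defl : ∀ {A B D : C} (f : A ⟶ B) (g : B ⟶ D),
    DeflationOf Dist f → DeflationOf Dist g → DeflationOf Dist (f ≫ g)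
  /-- (EA2): good lifts exist -/
  ea2 : ∀ (X Y : ExCpx n C) (h0 : Y.obj 0 = X.obj 0) (ρ : EE E (Y.obj (n + 1)) (Y.obj 0))
    (c : X.obj (n + 1) ⟶ Y.obj (n + 1)),
    Dist Y ρ → Dist X (castE rfl h0 (pull c ρ)) →
    ∃ φ : CpxHom X Y, φ.f 0 = eqToHom h0.symm ∧ φ.f (n + 1) = c ∧
      ∃ (M : ExCpx n C) (hM0 : M.obj 0 = X.obj 1) (hMtop : M.obj (n + 1) = Y.obj (n + 1)),
        IsMappingCone n φ M ∧
        Dist M (castE hMtop.symm hM0.symm (push (eqToHom h0 ≫ X.d 0) ρ))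
  /-- (EA2op): dually, good lifts exist -/
  ea2op : ∀ (X Y : ExCpx n C) (htop : Y.obj (n + 1) = X.obj (n + 1))
    (ρ : EE E (Y.obj (n + 1)) (Y.obj 0)) (a : Y.obj 0 ⟶ X.obj 0),
    Dist Y ρ → Dist X (castE htop rfl (push a ρ)) →
    ∃ φ : CpxHom Y X, φ.f 0 = a ∧ φ.f (n + 1) = eqToHom htop ∧
      ∃ (M : ExCpx n C) (hM0 : M.obj 0 = Y.obj 0) (hMtop : M.obj (n + 1) = X.obj n),
        IsMappingCocone n φ M ∧
        Dist M (castE hMtop.symm hM0.symm (pull (X.d n ≫ eqToHom htop.symm) ρ))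

/-- The morphism `A → 0` is a trivial inflation: it embeds in a distinguished
`n`-exangle `A → 0 → ⋯ → 0 → Y ⇢ δ`. -/
def TrivialInflation {n : ℕ} {E : Cᵒᵖ ⥤ C ⥤ AddCommGrpCat.{v}} (σ : NExStruct n C E)
    (A : C) : Prop :=
  ∃ (X : ExCpx n C) (δ : EE E (X.obj (n + 1)) (X.obj 0)),
    σ.Dist X δ ∧ X.obj 0 = A ∧ ∀ i, 1 ≤ i → i ≤ n → IsZero (X.obj i)

/-- The morphism `0 → A` is a trivial deflation: it embeds in a distinguished
`n`-exangle `Z → 0 → ⋯ → 0 → A ⇢ δ`. -/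
def TrivialDeflation {n : ℕ} {E : Cᵒᵖ ⥤ C ⥤ AddCommGrpCat.{v}} (σ : NExStruct n C E)
    (A : C) : Prop :=
  ∃ (X : ExCpx n C) (δ : EE E (X.obj (n + 1)) (X.obj 0)),
    σ.Dist X δ ∧ X.obj (n + 1) = A ∧ ∀ i, 1 ≤ i → i ≤ n → IsZero (X.obj i)

/-- An `(n+2)`-`Σ`-sequence `A₀ → A₁ → ⋯ → A_{n+1} → Σ A₀`. -/
structure AngSeq (n : ℕ) (C : Type u) [Category.{v} C] (S : C ⥤ C) where
  obj : ℕ → C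
  d : ∀ i, obj i ⟶ obj (i + 1)
  last : obj (n + 1) ⟶ S.obj (obj 0)

/-- A morphism of `(n+2)`-`Σ`-sequences. -/
structure AngHom {n : ℕ} {S : C ⥤ C} (T T' : AngSeq n C S) where
  f : ∀ i, T.obj i ⟶ T'.obj i
  comm : ∀ i, i ≤ n → T.d i ≫ f (i + 1) = f i ≫ T'.d i
  comm_last : T.last ≫ S.map (f 0) = f (n + 1) ≫ T'.last

/-- `T` and `T'` are isomorphic `(n+2)`-`Σ`-sequences. -/
def IsIsoSeq (n : ℕ) {S : C ⥤ C} (T T' : AngSeq n C S) : Prop :=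
  ∃ φ : AngHom T T', ∀ i, i ≤ n + 1 → IsIso (φ.f i)

/-- `Z` is a direct sum of the `(n+2)`-`Σ`-sequences `X` and `Y`. -/
def IsDirectSumSeq (n : ℕ) {S : C ⥤ C} (Z X Y : AngSeq n C S) : Prop :=
  ∃ (p : AngHom Z X) (q : AngHom Z Y) (ix : AngHom X Z) (iy : AngHom Y Z),
    (∀ i, i ≤ n + 1 → ix.f i ≫ p.f i = 𝟙 _) ∧ (∀ i, i ≤ n + 1 → iy.f i ≫ q.f i = 𝟙 _) ∧
    (∀ i, i ≤ n + 1 → ix.f i ≫ q.f i = 0) ∧ (∀ i, i ≤ n + 1 → iy.f i ≫ p.f i = 0) ∧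
    (∀ i, i ≤ n + 1 → p.f i ≫ ix.f i + q.f i ≫ iy.f i = 𝟙 _)

/-- `R` is the left rotation of the `(n+2)`-`Σ`-sequence `T`. -/
def IsLeftRotation (n : ℕ) {S : C ⥤ C} (T R : AngSeq n C S) : Prop :=
  ∃ (e : ∀ i, i ≤ n → R.obj i = T.obj (i + 1)) (etop : R.obj (n + 1) = S.obj (T.obj 0)),
    (∀ i (hi : i + 1 ≤ n), R.d i = eqToHom (e i (by omega)) ≫ T.d (i + 1) ≫
      eqToHom (e (i + 1) hi).symm) ∧
    (R.d n = eqToHom (e n le_rfl) ≫ T.last ≫ eqToHom etop.symm) ∧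
    (R.last = eqToHom etop ≫ (((-1 : ℤ) ^ n) • S.map (T.d 0)) ≫
      eqToHom (congrArg S.obj (e 0 (Nat.zero_le n))).symm)

/-- `M` is the mapping cone of the morphism `Φ` of `(n+2)`-`Σ`-sequences. -/
def IsMappingConeSeq (n : ℕ) {S : C ⥤ C} {T T' : AngSeq n C S} (Φ : AngHom T T')
    (M : AngSeq n C S) : Prop :=
  ∃ (e : ∀ i, i ≤ n → M.obj i = ((T.obj (i + 1)) ⊞ (T'.obj i)))
    (etop : M.obj (n + 1) = ((S.obj (T.obj 0)) ⊞ (T'.obj (n + 1)))),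
    (∀ i (hi : i + 1 ≤ n), M.d i = eqToHom (e i (by omega)) ≫
        biprod.desc (biprod.lift (-(T.d (i + 1))) (Φ.f (i + 1))) (biprod.lift 0 (T'.d i)) ≫
        eqToHom (e (i + 1) hi).symm) ∧
    (M.d n = eqToHom (e n le_rfl) ≫
        biprod.desc (biprod.lift (-(T.last)) (Φ.f (n + 1))) (biprod.lift 0 (T'.d n)) ≫
        eqToHom etop.symm) ∧
    (M.last = eqToHom etop ≫
        biprod.desc ((-(S.map (T.d 0) ≫ S.map biprod.inl)) + (S.map (Φ.f 0) ≫ S.map biprod.inr))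
          (T'.last ≫ S.map biprod.inr) ≫
        eqToHom (congrArg S.obj (e 0 (Nat.zero_le n))).symm)

/-- An `(n+2)`-angulated structure `(Σ, Θ)` on an additive category `C`
(Geiss–Keller–Oppermann): `Σ = S` is an auto-equivalence, `Θ = Theta` is a class of
`(n+2)`-`Σ`-sequences satisfying the axioms (N1)–(N4). -/
structure NAngStruct (n : ℕ) (C : Type u) [Category.{v} C] [Preadditive C] [HasZeroObject C]
    [HasFiniteBiproducts C] [HasBinaryBiproducts C] (S : C ⥤ C) : Type (max u v) where
  /-- `Σ` is an auto-equivalence -/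
  eqv : S.IsEquivalence
  Theta : AngSeq n C S → Prop
  /-- (N1)(a): closed under isomorphisms -/
  iso_closed : ∀ T T' : AngSeq n C S, Theta T → IsIsoSeq n T T' → Theta T'
  /-- (N1)(a): closed under direct sums -/
  sum_closed : ∀ Z X Y : AngSeq n C S, Theta X → Theta Y → IsDirectSumSeq n Z X Y → Theta Z
  /-- (N1)(a): closed under direct summands -/
  summand_closed : ∀ Z X Y : AngSeq n C S, Theta Z → IsDirectSumSeq n Z X Y → Theta X
  /-- (N1)(b): trivial sequences belong to `Theta` -/
  trivial_mem : ∀ T : AngSeq n C S, IsIso (T.d 0) →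
    (∀ i, 2 ≤ i → i ≤ n + 1 → IsZero (T.obj i)) → Theta T
  /-- (N1)(c): every morphism extends to an `(n+2)`-angle -/
  extend_mor : ∀ {A B : C} (f : A ⟶ B), ∃ T : AngSeq n C S, Theta T ∧
    ∃ (h0 : T.obj 0 = A) (h1 : T.obj 1 = B), T.d 0 = eqToHom h0 ≫ f ≫ eqToHom h1.symm
  /-- (N2): `Theta` is closed under left rotation -/
  rot : ∀ T R : AngSeq n C S, IsLeftRotation n T R → Theta T → Theta R
  /-- (N2): `Theta` is closed under right rotation -/
  rot_inv : ∀ T R : AngSeq n C S, IsLeftRotation n T R → Theta R → Theta T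
  /-- (N3): commutative squares extend to morphisms of `(n+2)`-angles -/
  n3 : ∀ T T' : AngSeq n C S, Theta T → Theta T' →
    ∀ (φ0 : T.obj 0 ⟶ T'.obj 0) (φ1 : T.obj 1 ⟶ T'.obj 1), T.d 0 ≫ φ1 = φ0 ≫ T'.d 0 →
      ∃ Φ : AngHom T T', Φ.f 0 = φ0 ∧ Φ.f 1 = φ1
  /-- (N4): the fillers can be chosen so that the mapping cone belongs to `Theta` -/
  n4 : ∀ T T' : AngSeq n C S, Theta T → Theta T' →
    ∀ (φ0 : T.obj 0 ⟶ T'.obj 0) (φ1 : T.obj 1 ⟶ T'.obj 1), T.d 0 ≫ φ1 = φ0 ≫ T'.d 0 →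
      ∃ Φ : AngHom T T', Φ.f 0 = φ0 ∧ Φ.f 1 = φ1 ∧
        ∃ M : AngSeq n C S, IsMappingConeSeq n Φ M ∧ Theta M

/-- The `(n+2)`-angulated structure `α` on `C` is `E`-compatible with the
`n`-exangulated structure `σ`: every `(n+2)`-angle, viewed as a complex, is a
distinguished `n`-exangle for some extension `δ`. -/
def ECompatible {n : ℕ} {E : Cᵒᵖ ⥤ C ⥤ AddCommGrpCat.{v}} (σ : NExStruct n C E)
    {S : C ⥤ C} (α : NAngStruct n C S) : Prop :=
  ∀ T : AngSeq n C S, α.Theta T →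
    ∃ (X : ExCpx n C) (h : ∀ i, i ≤ n + 1 → X.obj i = T.obj i),
      (∀ i (hi : i ≤ n), X.d i = eqToHom (h i (by omega)) ≫ T.d i ≫
        eqToHom (h (i + 1) (by omega)).symm) ∧
      ∃ δ : EE E (X.obj (n + 1)) (X.obj 0), σ.Dist X δ

/-- The realization `𝔯` of the bifunctor `E¹ = C(-, Σ-)` induced by the chosen
distinguished `n`-exangles `X → 0 → ⋯ → 0 → ΣX ⇢ δ_X`:
`𝔯(ε) := 𝔰(ε^* δ_{X₀})`, i.e. `⟨X, ε⟩` is `𝔯`-distinguished iff `⟨X, ε^* δ_{X₀}⟩`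
is `𝔰`-distinguished. -/
def DistR {n : ℕ} {E : Cᵒᵖ ⥤ C ⥤ AddCommGrpCat.{v}} (σ : NExStruct n C E) (F : C ⥤ C)
    (δ : ∀ X : C, EE E (F.obj X) X) :
    ∀ X : ExCpx n C, (X.obj (n + 1) ⟶ F.obj (X.obj 0)) → Prop :=
  fun X ε => σ.Dist X (pull ε (δ (X.obj 0)))

/-- Inflations with respect to a hom-valued (i.e. `E¹ = C(-, Σ-)`-valued)
distinguished-`n`-exangle predicate. -/
def HInflationOf {n : ℕ} (F : C ⥤ C)
    (R : ∀ X : ExCpx n C, (X.obj (n + 1) ⟶ F.obj (X.obj 0)) → Prop)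
    {A B : C} (f : A ⟶ B) : Prop :=
  ∃ (X : ExCpx n C) (ε : X.obj (n + 1) ⟶ F.obj (X.obj 0)) (h0 : X.obj 0 = A)
    (h1 : X.obj 1 = B), R X ε ∧ X.d 0 = eqToHom h0 ≫ f ≫ eqToHom h1.symm

/-- Deflations with respect to a hom-valued distinguished-`n`-exangle predicate. -/
def HDeflationOf {n : ℕ} (F : C ⥤ C)
    (R : ∀ X : ExCpx n C, (X.obj (n + 1) ⟶ F.obj (X.obj 0)) → Prop)
    {A B : C} (f : A ⟶ B) : Prop :=
  ∃ (X : ExCpx n C) (ε : X.obj (n + 1) ⟶ F.obj (X.obj 0)) (h0 : X.obj n = A)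
    (h1 : X.obj (n + 1) = B), R X ε ∧ X.d n = eqToHom h0 ≫ f ≫ eqToHom h1.symm

/-! ### Auxiliary lemmas for the proof of `statement_8` -/

section DensityAux

set_option linter.unusedSectionVars false

variable {E : Cᵒᵖ ⥤ C ⥤ AddCommGrpCat.{v}}

lemma push_push {B A A' A'' : C} (f : A ⟶ A') (g : A' ⟶ A'') (δ : EE E B A) :
    push g (push f δ) = push (f ≫ g) δ := by
  simp only [push]
  rw [CategoryTheory.Functor.map_comp]; rfl

lemma pull_pull {B B' B'' A : C} (g : B' ⟶ B) (g' : B'' ⟶ B') (δ : EE E B A) :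
    pull (g' ≫ g) δ = pull g' (pull g δ) := by
  simp only [pull]
  rw [op_comp, CategoryTheory.Functor.map_comp]; rfl

lemma push_pull_comm {B B' A A' : C} (f : A ⟶ A') (g : B' ⟶ B) (δ : EE E B A) :
    push f (pull g δ) = pull g (push f δ) := by
  have h := ConcreteCategory.congr_hom ((E.map g.op).naturality f) δ
  simp only [push, pull]
  simpa only [CategoryTheory.comp_apply] using h.symm

lemma push_id' {B A : C} (δ : EE E B A) : push (𝟙 A) δ = δ := by
  simp only [push]
  rw [CategoryTheory.Functor.map_id]; rfl

lemma pull_id' {B A : C} (δ : EE E B A) : pull (𝟙 B) δ = δ := by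
  simp only [pull]
  rw [op_id, CategoryTheory.Functor.map_id]; rfl

lemma push_zero_mor [∀ X : Cᵒᵖ, (E.obj X).Additive] {B A A' : C} (δ : EE E B A) :
    push (0 : A ⟶ A') δ = 0 := by
  simp only [push]
  rw [CategoryTheory.Functor.map_zero]; rfl

lemma pull_zero_mor [E.Additive] {B B' A : C} (δ : EE E B A) :
    pull (0 : B' ⟶ B) δ = 0 := by
  simp only [pull]
  rw [op_zero, CategoryTheory.Functor.map_zero]; rfl

lemma push_zero_ext {B A A' : C} (f : A ⟶ A') : push f (0 : EE E B A) = 0 :=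
  map_zero _

lemma pull_zero_ext {B B' A : C} (g : B' ⟶ B) : pull g (0 : EE E B A) = 0 :=
  map_zero _

lemma pull_add_ext {B B' A : C} (g : B' ⟶ B) (x y : EE E B A) :
    pull g (x + y) = pull g x + pull g y :=
  map_add _ _ _

lemma pull_add_mor [E.Additive] {B B' A : C} (g g' : B' ⟶ B) (δ : EE E B A) :
    pull (g + g') δ = pull g δ + pull g' δ := by
  simp only [pull]
  rw [op_add, CategoryTheory.Functor.map_add, NatTrans.app_add, AddCommGrpCat.hom_add_apply]

lemma pull_sub_mor [E.Additive] {B B' A : C} (g g' : B' ⟶ B) (δ : EE E B A) :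
    pull (g - g') δ = pull g δ - pull g' δ := by
  have h := pull_add_mor (E := E) (g - g') g' δ
  rw [sub_add_cancel] at h
  rw [h]; abel

lemma castE_eq {B B' A A' : C} (hB : B = B') (hA : A = A') (δ : EE E B A) :
    castE hB hA δ = push (eqToHom hA) (pull (eqToHom hB.symm) δ) := by
  subst hB; subst hA
  simp only [castE, eqToHom_refl, push_id', pull_id']

lemma castE_zero {B B' A A' : C} (hB : B = B') (hA : A = A') :
    castE hB hA (0 : EE E B A) = 0 := by
  subst hB; subst hA; rfl

lemma desc_eq_add {U V W : C} (u : U ⟶ W) (v : V ⟶ W) :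
    biprod.desc u v = biprod.fst ≫ u + biprod.snd ≫ v := by
  apply biprod.hom_ext' <;> simp

end DensityAux


section DensityBridge

set_option linter.unusedSectionVars false
set_option maxHeartbeats 1000000

variable {E : Cᵒᵖ ⥤ C ⥤ AddCommGrpCat.{v}}

/-- The key comparison: any two distinguished `n`-exangles with the same bottom object
and all middle terms zero have isomorphic top objects. -/
lemma bridge {n : ℕ} [∀ X : Cᵒᵖ, (E.obj X).Additive] [E.Additive]
    (hn : 0 < n) (σ : NExStruct n C E)
    (X Q : ExCpx n C)
    (δ' : EE E (X.obj (n + 1)) (X.obj 0)) (η : EE E (Q.obj (n + 1)) (Q.obj 0))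
    (hQ0 : Q.obj 0 = X.obj 0)
    (hdX : σ.Dist X δ') (hdQ : σ.Dist Q η)
    (hXmid : ∀ i, 1 ≤ i → i ≤ n → IsZero (X.obj i))
    (hQmid : ∀ i, 1 ≤ i → i ≤ n → IsZero (Q.obj i)) :
    Nonempty (X.obj (n + 1) ≅ Q.obj (n + 1)) := by
  have hn1 : 1 ≤ n := hn
  -- the "sum" extension over the biproduct of the two tops
  set η' : EE E (Q.obj (n + 1)) (X.obj 0) := push (eqToHom hQ0) η with hη'
  set ω : EE E ((X.obj (n + 1)) ⊞ (Q.obj (n + 1))) (X.obj 0) :=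
    pull biprod.fst δ' + pull biprod.snd η' with hω
  obtain ⟨S, hS0, hS1, hdS⟩ := σ.realize ω
  -- basic computations with ω
  have pull_inl_ω : pull biprod.inl ω = δ' := by
    rw [hω, pull_add_ext, ← pull_pull, ← pull_pull, biprod.inl_fst, biprod.inl_snd,
      pull_id', pull_zero_mor, add_zero]
  have pull_inr_ω : pull biprod.inr ω = η' := by
    rw [hω, pull_add_ext, ← pull_pull, ← pull_pull, biprod.inr_fst, biprod.inr_snd,
      pull_id', pull_zero_mor, zero_add]
  have hωS : castE hS1.symm hS0.symm ω
      = push (eqToHom hS0.symm) (pull (eqToHom hS1) ω) := castE_eq _ _ _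
  -- `pull (S.d n ≫ eqToHom hS1) ω = 0`
  have pull_dn_ω : pull (S.d n ≫ eqToHom hS1) ω = 0 := by
    have hap := σ.attached_pull S _ hdS
    rw [hωS, ← push_pull_comm, ← pull_pull] at hap
    have h2 := congrArg (push (E := E) (eqToHom hS0)) hap
    rwa [push_push, eqToHom_trans, eqToHom_refl, push_id', push_zero_ext] at h2
  -- first good lift : from X into S
  have key1 : castE rfl hS0 (pull (biprod.inl ≫ eqToHom hS1.symm) (castE hS1.symm hS0.symm ω))
      = δ' := by
    rw [hωS, ← push_pull_comm, ← pull_pull, Category.assoc, eqToHom_trans, eqToHom_refl,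
      Category.comp_id, pull_inl_ω, castE_eq, eqToHom_refl, pull_id', push_push,
      eqToHom_trans, eqToHom_refl, push_id']
  have hyp1 : σ.Dist X (castE rfl hS0
      (pull (biprod.inl ≫ eqToHom hS1.symm) (castE hS1.symm hS0.symm ω))) := by
    rw [key1]; exact hdX
  obtain ⟨φ, hφ0, hφn, M, hM0, hMtop, hcone, hdM⟩ :=
    σ.ea2 X S hS0 (castE hS1.symm hS0.symm ω) (biprod.inl ≫ eqToHom hS1.symm) hdS hyp1
  obtain ⟨e0, etop, emid, -, -, hdnM⟩ := hcone
  -- the cone realizes the zero extension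
  have hdM0 : σ.Dist M (0 : EE E (M.obj (n + 1)) (M.obj 0)) := by
    have hz : eqToHom hS0 ≫ X.d 0 = 0 := (hXmid 1 le_rfl hn1).eq_of_tgt _ _
    rwa [hz, push_zero_mor, castE_zero] at hdM
  -- factor `biprod.inr` through the last differential of the cone
  obtain ⟨h', hh'⟩ := σ.exact_contra_top M 0 hdM0 (Q.obj (n + 1))
    (biprod.inr ≫ eqToHom hS1.symm ≫ eqToHom etop.symm) (pull_zero_ext _)
  set d₁ : Q.obj (n + 1) ⟶ X.obj (n + 1) :=
    h' ≫ eqToHom (emid n hn1 le_rfl) ≫ biprod.fst with hd₁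
  set k₁ : Q.obj (n + 1) ⟶ S.obj n :=
    h' ≫ eqToHom (emid n hn1 le_rfl) ≫ biprod.snd with hk₁
  have E2 : d₁ ≫ biprod.inl + k₁ ≫ (S.d n ≫ eqToHom hS1)
      = (biprod.inr : Q.obj (n + 1) ⟶ (X.obj (n + 1)) ⊞ (Q.obj (n + 1))) := by
    have h4 := congrArg (fun t => t ≫ eqToHom etop ≫ eqToHom hS1) hh'
    simp only [Category.assoc, eqToHom_trans, eqToHom_refl, Category.comp_id] at h4
    rw [hdnM hn1, desc_eq_add, hφn] at h4
    simp only [Preadditive.add_comp, Preadditive.comp_add, Category.assoc, eqToHom_trans,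
      eqToHom_refl, Category.comp_id] at h4
    rw [hd₁, hk₁]
    simpa only [Category.assoc] using h4
  have B1 : pull d₁ δ' = η' := by
    have h5 := congrArg (fun g => pull g ω) E2
    simp only [pull_add_mor, pull_pull, pull_inl_ω, pull_inr_ω, pull_dn_ω,
      pull_zero_ext, add_zero] at h5
    exact h5
  -- second good lift : from Q into S
  have h0Q : S.obj 0 = Q.obj 0 := hS0.trans hQ0.symm
  have key2 : castE rfl h0Q (pull (biprod.inr ≫ eqToHom hS1.symm) (castE hS1.symm hS0.symm ω))
      = η := by
    rw [hωS, ← push_pull_comm, ← pull_pull, Category.assoc, eqToHom_trans, eqToHom_refl,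
      Category.comp_id, pull_inr_ω, castE_eq, eqToHom_refl, pull_id', push_push, hη',
      push_push]
    simp only [eqToHom_trans, eqToHom_refl, push_id']
  have hyp2 : σ.Dist Q (castE rfl h0Q
      (pull (biprod.inr ≫ eqToHom hS1.symm) (castE hS1.symm hS0.symm ω))) := by
    rw [key2]; exact hdQ
  obtain ⟨ψ, hψ0, hψn, N, hN0, hNtop, hcone2, hdN⟩ :=
    σ.ea2 Q S h0Q (castE hS1.symm hS0.symm ω) (biprod.inr ≫ eqToHom hS1.symm) hdS hyp2
  obtain ⟨f0, ftop, fmid, -, -, hdnN⟩ := hcone2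
  have hdN0 : σ.Dist N (0 : EE E (N.obj (n + 1)) (N.obj 0)) := by
    have hz : eqToHom h0Q ≫ Q.d 0 = 0 := (hQmid 1 le_rfl hn1).eq_of_tgt _ _
    rwa [hz, push_zero_mor, castE_zero] at hdN
  obtain ⟨h'', hh''⟩ := σ.exact_contra_top N 0 hdN0 (X.obj (n + 1))
    (biprod.inl ≫ eqToHom hS1.symm ≫ eqToHom ftop.symm) (pull_zero_ext _)
  set c₁ : X.obj (n + 1) ⟶ Q.obj (n + 1) :=
    h'' ≫ eqToHom (fmid n hn1 le_rfl) ≫ biprod.fst with hc₁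
  set k₂ : X.obj (n + 1) ⟶ S.obj n :=
    h'' ≫ eqToHom (fmid n hn1 le_rfl) ≫ biprod.snd with hk₂
  have E2' : c₁ ≫ biprod.inr + k₂ ≫ (S.d n ≫ eqToHom hS1)
      = (biprod.inl : X.obj (n + 1) ⟶ (X.obj (n + 1)) ⊞ (Q.obj (n + 1))) := by
    have h4 := congrArg (fun t => t ≫ eqToHom ftop ≫ eqToHom hS1) hh''
    simp only [Category.assoc, eqToHom_trans, eqToHom_refl, Category.comp_id] at h4
    rw [hdnN hn1, desc_eq_add, hψn] at h4
    simp only [Preadditive.add_comp, Preadditive.comp_add, Category.assoc, eqToHom_trans,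
      eqToHom_refl, Category.comp_id] at h4
    rw [hc₁, hk₂]
    simpa only [Category.assoc] using h4
  have B2 : pull c₁ η' = δ' := by
    have h5 := congrArg (fun g => pull g ω) E2'
    simp only [pull_add_mor, pull_pull, pull_inl_ω, pull_inr_ω, pull_dn_ω,
      pull_zero_ext, add_zero] at h5
    exact h5
  -- the two maps are mutually inverse
  have hcd : c₁ ≫ d₁ = 𝟙 (X.obj (n + 1)) := by
    have hpull : pull (𝟙 (X.obj (n + 1)) - c₁ ≫ d₁) δ' = 0 := by
      rw [pull_sub_mor, pull_id', pull_pull, B1, B2, sub_self]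
    obtain ⟨u, hu⟩ := σ.exact_contra_top X δ' hdX _ _ hpull
    have hu0 : u = 0 := (hXmid n hn1 le_rfl).eq_of_tgt u 0
    rw [hu0, Limits.zero_comp] at hu
    have := sub_eq_zero.mp hu.symm
    exact this.symm
  have hdc : d₁ ≫ c₁ = 𝟙 (Q.obj (n + 1)) := by
    have hpull' : pull (𝟙 (Q.obj (n + 1)) - d₁ ≫ c₁) η' = 0 := by
      rw [pull_sub_mor, pull_id', pull_pull, B2, B1, sub_self]
    have hpull : pull (𝟙 (Q.obj (n + 1)) - d₁ ≫ c₁) η = 0 := by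
      rw [hη', ← push_pull_comm] at hpull'
      have h2 := congrArg (push (E := E) (eqToHom hQ0.symm)) hpull'
      rwa [push_push, eqToHom_trans, eqToHom_refl, push_id', push_zero_ext] at h2
    obtain ⟨v, hv⟩ := σ.exact_contra_top Q η hdQ _ _ hpull
    have hv0 : v = 0 := (hQmid n hn1 le_rfl).eq_of_tgt v 0
    rw [hv0, Limits.zero_comp] at hv
    have := sub_eq_zero.mp hv.symm
    exact this.symm
  exact ⟨⟨c₁, d₁, hcd, hdc⟩⟩

end DensityBridge


theorem statement_8 {C : Type u} [Category.{v} C] [Preadditive C] [HasZeroObject C]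
    [HasFiniteBiproducts C] [HasBinaryBiproducts C]
    (E : Cᵒᵖ ⥤ C ⥤ AddCommGrpCat.{v}) [∀ X : Cᵒᵖ, (E.obj X).Additive] [E.Additive]
    (n : ℕ) (hn : 0 < n) (σ : NExStruct n C E)
    (htriv : ∀ X : C, TrivialInflation σ X ∧ TrivialDeflation σ X)
    (F : C ⥤ C) (cpx : C → ExCpx n C)
    (hc0 : ∀ X : C, (cpx X).obj 0 = X) (hctop : ∀ X : C, (cpx X).obj (n + 1) = F.obj X)
    (hmid : ∀ (X : C) (i : ℕ), 1 ≤ i → i ≤ n → IsZero ((cpx X).obj i))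
    (δ : ∀ X : C, EE E (F.obj X) X)
    (hdist : ∀ X : C, σ.Dist (cpx X) (castE (hctop X).symm (hc0 X).symm (δ X)))
    (hF : ∀ {X Y : C} (f : X ⟶ Y), push f (δ X) = pull (F.map f) (δ Y)) :
    ∀ Y₀ : C, ∃ X₀ : C, Nonempty (F.obj X₀ ≅ Y₀) := by
  intro Y₀
  obtain ⟨X, δ', hdX, hXtop, hXmid⟩ := (htriv Y₀).2
  refine ⟨X.obj 0, ?_⟩
  obtain ⟨iso⟩ := bridge hn σ X (cpx (X.obj 0)) δ'
    (castE (hctop (X.obj 0)).symm (hc0 (X.obj 0)).symm (δ (X.obj 0)))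
    (hc0 (X.obj 0)) hdX (hdist (X.obj 0)) hXmid (fun i h1 h2 => hmid (X.obj 0) i h1 h2)
  exact ⟨(eqToIso (hctop (X.obj 0))).symm ≪≫ iso.symm ≪≫ eqToIso hXtop⟩

end Paper
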